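/- Let p ∈ (0,1/2), Q ≥ 1 an integer, Δ = log(p/(1-p)) < 0, and K ~ Binomial(2Q, p). Then for every integer κ ≥ 1, E[tanh^{2κ}(|Q - K|·|Δ|)] = Σ_{i=0}^{Q-1} binom(2Q,i) C^i S_{r_i}^{1-2κ} D_{r_i}^{2κ}, where C = p(1-p), rᵢ = 2Q-2i, S_r = (1-p)^r + p^r, D_r = (1-p)^r - p^r. -/

import Mathlib

lemma tanh_log_ratio (p : ℝ) (h0 : 0 < p) (h1 : p < 1) (m : ℕ) :
    Real.tanh (m * Real.log ((1-p)/p)) =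
      ((1-p)^(2*m) - p^(2*m)) / ((1-p)^(2*m) + p^(2*m)) := by
  have hp1 : 0 < 1 - p := by linarith
  have ht : 0 < (1-p)/p := div_pos hp1 h0
  have he : Real.exp ((m:ℝ) * Real.log ((1-p)/p)) = ((1-p)/p)^m := by
    rw [Real.exp_nat_mul, Real.exp_log ht]
  have hS : 0 < (1-p)^(2*m) + p^(2*m) := by positivity
  rw [Real.tanh_eq_sinh_div_cosh, Real.sinh_eq, Real.cosh_eq, Real.exp_neg, he]
  rw [div_pow]
  rw [div_eq_div_iff (by positivity) (ne_of_gt hS)]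
  field_simp
  ring

theorem binomial_tanh_even_moments (p : ℝ) (hp : p ∈ Set.Ioo (0:ℝ) (1/2))
    (Q : ℕ) (hQ : 1 ≤ Q) (κ : ℕ) (hκ : 1 ≤ κ) :
    ∑ i ∈ Finset.range (2 * Q + 1),
        (Nat.choose (2 * Q) i : ℝ) * p ^ i * (1 - p) ^ (2 * Q - i) *
          (Real.tanh (|(Q : ℝ) - (i : ℝ)| * |Real.log (p / (1 - p))|)) ^ (2 * κ) =
      ∑ i ∈ Finset.range Q,
        (Nat.choose (2 * Q) i : ℝ) * (p * (1 - p)) ^ i *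
          ((1 - p) ^ (2 * Q - 2 * i) + p ^ (2 * Q - 2 * i)) ^ ((1 : ℤ) - 2 * κ) *
          ((1 - p) ^ (2 * Q - 2 * i) - p ^ (2 * Q - 2 * i)) ^ (2 * κ) := by
  obtain ⟨h0, h12⟩ := hp
  have hp1 : 0 < 1 - p := by linarith
  have hpp : p < 1 - p := by linarith
  have hlog : |Real.log (p / (1 - p))| = Real.log ((1-p)/p) := by
    have h1 : p / (1-p) = ((1-p)/p)⁻¹ := by rw [inv_div]
    rw [h1, Real.log_inv, abs_neg, abs_of_nonneg]
    exact Real.log_nonneg (by rw [le_div_iff₀ h0]; linarith)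
  set L := Real.log ((1-p)/p) with hL
  set f : ℕ → ℝ := fun i =>
    (Nat.choose (2 * Q) i : ℝ) * p ^ i * (1 - p) ^ (2 * Q - i) *
      (Real.tanh (|(Q : ℝ) - (i : ℝ)| * |Real.log (p / (1 - p))|)) ^ (2 * κ) with hf
  have hsplit : ∑ i ∈ Finset.range (2 * Q + 1), f i
      = (∑ i ∈ Finset.range Q, f i) + ((∑ i ∈ Finset.range Q, f (2*Q - i)) + f Q) := by
    rw [show 2*Q+1 = Q + (Q+1) by ring, Finset.sum_range_add, Finset.sum_range_succ']
    congr 1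
    congr 1
    rw [← Finset.sum_range_reflect]
    apply Finset.sum_congr rfl
    intro j hj
    simp only [Finset.mem_range] at hj
    congr 1
    omega
  have hfQ : f Q = 0 := by
    simp only [hf]
    rw [sub_self, abs_zero, zero_mul, Real.tanh_zero, zero_pow (by omega)]
    ring
  rw [hsplit, hfQ, add_zero, ← Finset.sum_add_distrib]
  apply Finset.sum_congr rfl
  intro i hi
  simp only [Finset.mem_range] at hi
  have hi2 : i ≤ 2*Q := by omega
  have hc : ((2*Q - i : ℕ) : ℝ) = 2*(Q:ℝ) - i := by
    push_cast [Nat.cast_sub hi2]; ring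
  have hcQ : ((Q - i : ℕ) : ℝ) = (Q:ℝ) - i := by
    push_cast [Nat.cast_sub hi.le]; ring
  have habs1 : |(Q : ℝ) - (i : ℝ)| = ((Q - i : ℕ) : ℝ) := by
    rw [hcQ, abs_of_nonneg]
    rw [sub_nonneg]
    exact_mod_cast hi.le
  have habs2 : |(Q : ℝ) - ((2*Q - i : ℕ) : ℝ)| = ((Q - i : ℕ) : ℝ) := by
    rw [hc, hcQ, show (Q:ℝ) - (2*Q - i) = -((Q:ℝ) - i) by ring, abs_neg, abs_of_nonneg]
    rw [sub_nonneg]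
    exact_mod_cast hi.le
  have htanh : Real.tanh (((Q - i : ℕ) : ℝ) * |Real.log (p / (1 - p))|)
      = ((1-p)^(2*Q-2*i) - p^(2*Q-2*i)) / ((1-p)^(2*Q-2*i) + p^(2*Q-2*i)) := by
    rw [hlog, tanh_log_ratio p h0 (by linarith) (Q - i), show 2*(Q-i) = 2*Q - 2*i by omega]
  have hchoose : ((2*Q).choose (2*Q - i) : ℝ) = ((2*Q).choose i : ℝ) := by
    exact_mod_cast congrArg Nat.cast (Nat.choose_symm hi2)
  simp only [hf, habs1, habs2, htanh, hchoose]
  set S := (1-p)^(2*Q-2*i) + p^(2*Q-2*i) with hSdef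
  set D := (1-p)^(2*Q-2*i) - p^(2*Q-2*i) with hDdef
  have hS : 0 < S := by positivity
  have hzpow : S ^ ((1:ℤ) - 2*(κ:ℤ)) = S * (S ^ (2*κ))⁻¹ := by
    rw [zpow_sub₀ hS.ne', zpow_one, show (2*(κ:ℤ)) = ((2*κ:ℕ):ℤ) by push_cast; ring,
      zpow_natCast, div_eq_mul_inv]
  rw [hzpow]
  rw [show 2*Q - (2*Q - i) = i by omega, show 2*Q - i = i + (2*Q - 2*i) by omega]
  rw [pow_add, pow_add]
  have hSpow : S ^ (2*κ) ≠ 0 := pow_ne_zero _ hS.ne'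
  rw [mul_pow]
  have h1 : S ^ (2*κ) * S⁻¹ ^ (2*κ) = 1 := by rw [← mul_pow, mul_inv_cancel₀ hS.ne', one_pow]
  field_simp
  clear_value S D
  linear_combination (((2*Q).choose i : ℝ) * D^(2*κ) * (p^(2*Q-2*i) + (1-p)^(2*Q-2*i))) * h1 - (((2*Q).choose i : ℝ) * D^(2*κ)) * hSdef
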